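/- Suppose η = ε_{i₀} for some i₀ ∈ D₁. Define σ = 1 + a_{bw} + a_{i₀w} + Σ_{i ∈ D, i ≠ i₀} min{a_{iw} + ε_{i₀}, a_{bw}/a_{bi}}, and the weight set W by w_b = (a_{bw} − ε_{i₀})/σ, w_{i₀} = (a_{i₀w} + ε_{i₀})/σ, w_w = 1/σ, and w_i = min{a_{iw} + ε_{i₀}, a_{bw}/a_{bi}}/σ for i ∈ D\{i₀}. Then W ∈ 𝒲 and ε_W = ε_{i₀}/σ. -/

import Mathlib

open Finset

noncomputable def epsW (D : Finset ℕ) (hD : D.Nonempty) (b w : ℕ)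
    (ab aw : ℕ → ℝ) (abw : ℝ) (v : ℕ → ℝ) : ℝ :=
  D.sup' hD fun i =>
    max |v b - ab i * v i| (max |v i - aw i * v w| |v b - abw * v w|)

noncomputable def epsi (ab aw : ℕ → ℝ) (abw : ℝ) (i : ℕ) : ℝ :=
  |ab i * aw i - abw| / (ab i + 2)

noncomputable def epsij (ab aw : ℕ → ℝ) (i j : ℕ) : ℝ :=
  |ab i * aw i - ab j * aw j| / (ab i + ab j + 2)

noncomputable def eta (D : Finset ℕ) (hD : D.Nonempty) (ab aw : ℕ → ℝ) (abw : ℝ) : ℝ :=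
  (D ×ˢ D).sup' (hD.product hD) fun p =>
    max (epsi ab aw abw p.1) (epsij ab aw p.1 p.2)

set_option maxHeartbeats 1000000 in
/-- the explicit candidate W lies in 𝒲 and satisfies ε_W = ε_{i₀}/σ. -/
theorem stmt13 (n b w : ℕ) (hn : 3 ≤ n) (hb : b ∈ Icc 1 n) (hw : w ∈ Icc 1 n) (hbw : b ≠ w)
    (ab aw : ℕ → ℝ) (abw : ℝ)
    (hab : ∀ i ∈ Icc 1 n \ {b, w}, 0 < ab i) (haw : ∀ i ∈ Icc 1 n \ {b, w}, 0 < aw i)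
    (habw : 0 < abw)
    (hD : (Icc 1 n \ {b, w}).Nonempty)
    (i0 : ℕ) (hi0 : i0 ∈ Icc 1 n \ {b, w}) (hi0D1 : ab i0 * aw i0 < abw)
    (heta : eta (Icc 1 n \ {b, w}) hD ab aw abw = epsi ab aw abw i0)
    (hbig : epsi ab aw abw i0 < abw)
    (σ : ℝ)
    (hσ : σ = 1 + abw + aw i0 +
      ∑ i ∈ (Icc 1 n \ {b, w}).erase i0, min (aw i + epsi ab aw abw i0) (abw / ab i))
    (v : ℕ → ℝ)
    (hv : ∀ i, v i = if i = b then (abw - epsi ab aw abw i0) / σ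
      else if i = w then 1 / σ
      else if i = i0 then (aw i0 + epsi ab aw abw i0) / σ
      else min (aw i + epsi ab aw abw i0) (abw / ab i) / σ) :
    (∀ i ∈ Icc 1 n, 0 ≤ v i) ∧ (∑ i ∈ Icc 1 n, v i) = 1 ∧
      epsW (Icc 1 n \ {b, w}) hD b w ab aw abw v = epsi ab aw abw i0 / σ := by
  set D := Icc 1 n \ {b, w} with hDdef
  set ε := epsi ab aw abw i0 with hεdef
  obtain ⟨hi0Icc, hi0bw⟩ := Finset.mem_sdiff.mp hi0
  have hi0b : i0 ≠ b := by simp at hi0bw; exact hi0bw.1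
  have hi0w : i0 ≠ w := by simp at hi0bw; exact hi0bw.2
  have habi0 : 0 < ab i0 := hab i0 hi0
  have hawi0 : 0 < aw i0 := haw i0 hi0
  have hε_eq : ε * (ab i0 + 2) = abw - ab i0 * aw i0 := by
    rw [hεdef]
    unfold epsi
    rw [abs_of_nonpos (by linarith)]
    field_simp
    ring
  have hεnonneg : 0 ≤ ε := by
    rw [hεdef]; unfold epsi
    apply div_nonneg (abs_nonneg _) (by linarith)
  -- key inequalities from eta = epsi i0
  have hkey : ∀ i ∈ D, |ab i * aw i - abw| ≤ ε * (ab i + 2) := by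
    intro i hi
    have habi := hab i hi
    have h1 : epsi ab aw abw i ≤ eta D hD ab aw abw := by
      refine le_trans (le_max_left _ (epsij ab aw i i)) ?_
      have hmem : (i, i) ∈ D ×ˢ D := Finset.mem_product.mpr ⟨hi, hi⟩
      exact Finset.le_sup' (fun p => max (epsi ab aw abw p.1) (epsij ab aw p.1 p.2)) hmem
    rw [heta] at h1
    have h2 : epsi ab aw abw i * (ab i + 2) ≤ ε * (ab i + 2) :=
      mul_le_mul_of_nonneg_right h1 (by linarith)
    calc |ab i * aw i - abw| = epsi ab aw abw i * (ab i + 2) := by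
          unfold epsi; field_simp
      _ ≤ ε * (ab i + 2) := h2
  have hkey2 : ∀ i ∈ D, |ab i * aw i - ab i0 * aw i0| ≤ ε * (ab i + ab i0 + 2) := by
    intro i hi
    have habi := hab i hi
    have h1 : epsij ab aw i i0 ≤ eta D hD ab aw abw := by
      refine le_trans (le_max_right (epsi ab aw abw i) _) ?_
      have hmem : (i, i0) ∈ D ×ˢ D := Finset.mem_product.mpr ⟨hi, hi0⟩
      exact Finset.le_sup' (fun p => max (epsi ab aw abw p.1) (epsij ab aw p.1 p.2)) hmem
    rw [heta] at h1
    have h2 : epsij ab aw i i0 * (ab i + ab i0 + 2) ≤ ε * (ab i + ab i0 + 2) :=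
      mul_le_mul_of_nonneg_right h1 (by linarith)
    calc |ab i * aw i - ab i0 * aw i0| = epsij ab aw i i0 * (ab i + ab i0 + 2) := by
          unfold epsij; field_simp
      _ ≤ ε * (ab i + ab i0 + 2) := h2
  -- sigma positive
  have hmnonneg : ∀ i ∈ D.erase i0, 0 ≤ min (aw i + ε) (abw / ab i) := by
    intro i hi
    have hiD := Finset.mem_of_mem_erase hi
    have := haw i hiD
    have := hab i hiD
    exact le_min (by linarith) (by positivity)
  have hS : 0 ≤ ∑ i ∈ D.erase i0, min (aw i + ε) (abw / ab i) :=
    Finset.sum_nonneg hmnonneg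
  have hσpos : 0 < σ := by rw [hσ]; linarith
  -- values of v
  have hvb : v b = (abw - ε) / σ := by rw [hv]; simp [← hεdef]
  have hvw : v w = 1 / σ := by rw [hv]; simp [Ne.symm hbw]
  have hvi0 : v i0 = (aw i0 + ε) / σ := by rw [hv]; simp [hi0b, hi0w, ← hεdef]
  have hvi : ∀ i ∈ D.erase i0, v i = min (aw i + ε) (abw / ab i) / σ := by
    intro i hi
    obtain ⟨hii0, hiD⟩ := Finset.mem_erase.mp hi
    obtain ⟨-, hibw⟩ := Finset.mem_sdiff.mp hiD
    simp only [Finset.mem_insert, Finset.mem_singleton, not_or] at hibw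
    rw [hv]; simp [hibw.1, hibw.2, hii0, ← hεdef]
  -- nonnegativity
  have hnonneg : ∀ i ∈ Icc 1 n, 0 ≤ v i := by
    intro i hiIcc
    by_cases hib : i = b
    · rw [hib, hvb]; rw [hεdef]; apply div_nonneg (by rw [← hεdef]; linarith) hσpos.le
    by_cases hiw : i = w
    · rw [hiw, hvw]; positivity
    have hiD : i ∈ D := Finset.mem_sdiff.mpr ⟨hiIcc, by simp [hib, hiw]⟩
    by_cases hii0 : i = i0
    · rw [hii0, hvi0]; apply div_nonneg (by linarith) hσpos.le
    · rw [hvi i (Finset.mem_erase.mpr ⟨hii0, hiD⟩)]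
      exact div_nonneg (hmnonneg i (Finset.mem_erase.mpr ⟨hii0, hiD⟩)) hσpos.le
  refine ⟨hnonneg, ?_, ?_⟩
  · -- sum = 1
    have hsub : ({b, w} : Finset ℕ) ⊆ Icc 1 n := by
      intro x hx
      simp only [Finset.mem_insert, Finset.mem_singleton] at hx
      rcases hx with h | h <;> subst h <;> assumption
    have hsplit : ∑ i ∈ D, v i + ∑ i ∈ ({b, w} : Finset ℕ), v i = ∑ i ∈ Icc 1 n, v i :=
      Finset.sum_sdiff hsub
    have hpair : ∑ i ∈ ({b, w} : Finset ℕ), v i = v b + v w := Finset.sum_pair hbw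
    have hDsum : ∑ i ∈ D, v i = v i0 + ∑ i ∈ D.erase i0, v i :=
      (Finset.add_sum_erase D v hi0).symm
    have herase : ∑ i ∈ D.erase i0, v i
        = (∑ i ∈ D.erase i0, min (aw i + ε) (abw / ab i)) / σ := by
      rw [Finset.sum_div]
      exact Finset.sum_congr rfl hvi
    rw [← hsplit, hpair, hDsum, herase, hvb, hvw, hvi0]
    have hcomb : (aw i0 + ε) / σ + (∑ i ∈ D.erase i0, min (aw i + ε) (abw / ab i)) / σ
        + ((abw - ε) / σ + 1 / σ)
        = (1 + abw + aw i0 + ∑ i ∈ D.erase i0, min (aw i + ε) (abw / ab i)) / σ := by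
      ring
    rw [hcomb, ← hσ, div_self hσpos.ne']
  · -- epsW
    have habsdiv : ∀ x : ℝ, |x| ≤ ε → |x / σ| ≤ ε / σ := by
      intro x h
      rw [abs_div, abs_of_pos hσpos]
      gcongr
    have h3 : ∀ i : ℕ, |v b - abw * v w| = ε / σ := by
      intro i
      rw [hvb, hvw]
      have : (abw - ε) / σ - abw * (1 / σ) = -ε / σ := by ring
      rw [this, abs_div, abs_of_pos hσpos, abs_neg, abs_of_nonneg hεnonneg]
    apply le_antisymm
    · apply Finset.sup'_le
      intro i hi
      have habi := hab i hi
      have hawi := haw i hi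
      have hA := abs_le.mp (hkey i hi)
      have hB := abs_le.mp (hkey2 i hi)
      refine max_le ?_ (max_le ?_ (le_of_eq (h3 i)))
      · -- |v b - ab i * v i| ≤ ε/σ
        by_cases hii0 : i = i0
        · rw [hii0, hvb, hvi0]
          have : (abw - ε) / σ - ab i0 * ((aw i0 + ε) / σ)
              = (abw - ε - ab i0 * (aw i0 + ε)) / σ := by ring
          rw [this]
          apply habsdiv
          have hXε : abw - ε - ab i0 * (aw i0 + ε) = ε := by linear_combination -hε_eq
          rw [hXε, abs_of_nonneg hεnonneg]
        · rw [hvb, hvi i (Finset.mem_erase.mpr ⟨hii0, hi⟩)]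
          set m := min (aw i + ε) (abw / ab i) with hm
          have : (abw - ε) / σ - ab i * (m / σ) = (abw - ε - ab i * m) / σ := by ring
          rw [this]
          apply habsdiv
          rw [abs_le]
          rcases min_cases (aw i + ε) (abw / ab i) with ⟨hmeq, hle⟩ | ⟨hmeq, hle⟩ <;>
            rw [hm, hmeq]
          · have hle' : ab i * (aw i + ε) ≤ abw := by
              rw [← le_div_iff₀' habi]; exact hle
            constructor <;> nlinarith
          · have habim : ab i * (abw / ab i) = abw := by field_simp
            rw [habim]
            constructor <;> linarith
      · -- |v i - aw i * v w| ≤ ε/σ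
        by_cases hii0 : i = i0
        · rw [hii0, hvi0, hvw]
          have : (aw i0 + ε) / σ - aw i0 * (1 / σ) = ε / σ := by ring
          rw [this]
          apply habsdiv
          rw [abs_of_nonneg hεnonneg]
        · rw [hvw, hvi i (Finset.mem_erase.mpr ⟨hii0, hi⟩)]
          set m := min (aw i + ε) (abw / ab i) with hm
          have : m / σ - aw i * (1 / σ) = (m - aw i) / σ := by ring
          rw [this]
          apply habsdiv
          rw [abs_le]
          have hlow : aw i - ε ≤ abw / ab i := by
            rw [le_div_iff₀ habi]
            nlinarith
          constructor
          · have : aw i - ε ≤ m := le_min (by linarith) hlow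
            linarith
          · have : m ≤ aw i + ε := min_le_left _ _
            linarith
    · refine le_trans ?_ (Finset.le_sup'
        (f := fun i => max |v b - ab i * v i| (max |v i - aw i * v w| |v b - abw * v w|)) hi0)
      exact le_trans (le_of_eq (h3 i0).symm) (le_max_right _ _ |>.trans (le_max_right _ _))
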